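/- Let ρ be a Hermitian n×n complex matrix and f : {1,…,n} → β a labeling function; let ρ̂ be the Lüders mixture of ρ with respect to f, i.e., ρ̂_{jk} = ρ_{jk} if f(j) = f(k) and ρ̂_{jk} = 0 otherwise. Then the increase in quantum logical entropy (1 − tr[ρ̂²]) − (1 − tr[ρ²]) equals the sum of the absolute squares of the entries zeroed by the operation: Σ_{(j,k) : f(j) ≠ f(k)} ‖ρ_{jk}‖². -/

import Mathlib

open scoped Classical

noncomputable section

/-- The Lüders mixture of a matrix `ρ` with respect to a labeling function `f`:
the entry `(j,k)` is kept when `f j = f k` and zeroed otherwise. -/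
def luders {n : ℕ} {β : Type*} (f : Fin n → β) (ρ : Matrix (Fin n) (Fin n) ℂ) :
    Matrix (Fin n) (Fin n) ℂ :=
  Matrix.of fun j k => if f j = f k then ρ j k else 0

/-- The increase in quantum logical entropy `(1 − tr[ρ̂²]) −(1 − tr[ρ²])` due to
the Lüders mixture operation equals the sum of the absolute squares of the
entries of `ρ` that are zeroed by the operation. -/
theorem entropy_increase_eq_sum_zeroed {n : ℕ} {β : Type*}
    (ρ : Matrix (Fin n) (Fin n) ℂ) (hρ : ρ.IsHermitian) (f : Fin n → β) :
    (1 - Matrix.trace (luders f ρ * luders f ρ)) - (1 - Matrix.trace (ρ * ρ))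
      = ((∑ j, ∑ k, if f j ≠ f k then ‖ρ j k‖ ^ 2 else 0 : ℝ) : ℂ) := by
  have key : ∀ j k : Fin n, ρ j k * ρ k j = ((‖ρ j k‖ ^ 2 : ℝ) : ℂ) := by
    intro j k
    have h : ρ k j = starRingEnd ℂ (ρ j k) := by
      rw [← hρ.apply j k]; simp
    rw [h, Complex.mul_conj]
    norm_cast
    rw [Complex.normSq_eq_norm_sq]
  have : (1 - Matrix.trace (luders f ρ * luders f ρ)) - (1 - Matrix.trace (ρ * ρ))
      = Matrix.trace (ρ * ρ) - Matrix.trace (luders f ρ * luders f ρ) := by ring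
  rw [this]
  simp only [Matrix.trace, Matrix.diag, Matrix.mul_apply, luders, Matrix.of_apply]
  rw [← Finset.sum_sub_distrib]
  push_cast
  rw [Finset.sum_congr rfl]
  intro j _
  rw [← Finset.sum_sub_distrib]
  apply Finset.sum_congr rfl
  intro k _
  by_cases h : f j = f k
  · simp [h, key j k]
  · simp [h, key j k]
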